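/- arXiv:1307.2223 — 2 statements merged into one kernel-verified Lean document; each statement's English description precedes it below -/
import Mathlib

section
/- If z ∈ L²(μ) with μ = μ₁ ⊗ ⋯ ⊗ μ_d a product probability measure, then z admits a decomposition z(x) = Σ_{u ⊆ {1,…,d}} z_u(x^u), where each summand depends only on the variables indexed by u, and this decomposition is unique under the constraint that ∫ z_u(x^u) dμ_i(x^i) = 0 for every u ≠ ∅ and every i ∈ u. -/
open MeasureTheory

set_option linter.unusedSectionVars false

section HoeffdingAux

variable {d : ℕ} {Q : Fin d → Type*} [∀ i, MeasurableSpace (Q i)]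

/-- Merge two points: coordinates in `u` from `x`, the rest from `y`. -/
def hsMerge (u : Finset (Fin d)) (x y : ∀ i, Q i) : ∀ i, Q i :=
  fun i => if i ∈ u then x i else y i

lemma hsMerge_measurable (u : Finset (Fin d)) :
    Measurable (fun p : (∀ i, Q i) × (∀ i, Q i) => hsMerge u p.1 p.2) := by
  apply measurable_pi_lambda
  intro i
  by_cases h : i ∈ u
  · simp only [hsMerge, h, if_true]; exact (measurable_pi_apply i).comp measurable_fst
  · simp only [hsMerge, h, if_false]; exact (measurable_pi_apply i).comp measurable_snd

variable (ν : ∀ i, Measure (Q i)) [∀ i, IsProbabilityMeasure (ν i)]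

lemma hsMerge_measurePreserving (u : Finset (Fin d)) :
    MeasurePreserving (fun p : (∀ i, Q i) × (∀ i, Q i) => hsMerge u p.1 p.2)
      ((Measure.pi ν).prod (Measure.pi ν)) (Measure.pi ν) := by
  refine ⟨hsMerge_measurable u, ?_⟩
  refine (Measure.pi_eq fun s hs => ?_).symm
  have hpre : (fun p : (∀ i, Q i) × (∀ i, Q i) => hsMerge u p.1 p.2) ⁻¹' (Set.pi Set.univ s)
      = (Set.pi Set.univ fun i => if i ∈ u then s i else Set.univ) ×ˢ
        (Set.pi Set.univ fun i => if i ∈ u then Set.univ else s i) := by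
    ext p
    simp only [Set.mem_preimage, Set.mem_pi, Set.mem_univ, forall_true_left, Set.mem_prod,
      hsMerge]
    constructor
    · intro h
      constructor <;> intro i <;> by_cases hi : i ∈ u <;> simp only [hi, if_true, if_false,
        Set.mem_univ] <;> simpa [hi] using h i
    · rintro ⟨h1, h2⟩ i
      by_cases hi : i ∈ u
      · simpa [hi] using h1 i
      · simpa [hi] using h2 i
  rw [Measure.map_apply (hsMerge_measurable u) (MeasurableSet.univ_pi hs), hpre,
    Measure.prod_prod, Measure.pi_pi, Measure.pi_pi, ← Finset.prod_mul_distrib]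
  refine Finset.prod_congr rfl fun i _ => ?_
  by_cases hi : i ∈ u <;> simp [hi]

lemma hsUpdate_measurePreserving (i : Fin d) :
    MeasurePreserving (fun p : Q i × (∀ j, Q j) => Function.update p.2 i p.1)
      ((ν i).prod (Measure.pi ν)) (Measure.pi ν) := by
  have hmeas : Measurable (fun p : Q i × (∀ j, Q j) => Function.update p.2 i p.1) :=
    measurable_update'.comp measurable_swap
  refine ⟨hmeas, ?_⟩
  refine (Measure.pi_eq fun s hs => ?_).symm
  have hpre : (fun p : Q i × (∀ j, Q j) => Function.update p.2 i p.1) ⁻¹' (Set.pi Set.univ s)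
      = s i ×ˢ (Set.pi Set.univ fun j => if j = i then Set.univ else s j) := by
    ext p
    simp only [Set.mem_preimage, Set.mem_pi, Set.mem_univ, forall_true_left, Set.mem_prod]
    constructor
    · intro h
      refine ⟨by simpa using h i, fun j => ?_⟩
      by_cases hj : j = i
      · simp [hj]
      · simpa [hj, Function.update_of_ne hj] using h j
    · rintro ⟨h1, h2⟩ j
      by_cases hj : j = i
      · subst hj; simpa using h1
      · have := h2 j
        simpa [hj, Function.update_of_ne hj] using this
  rw [Measure.map_apply hmeas (MeasurableSet.univ_pi hs), hpre, Measure.prod_prod,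
    Measure.pi_pi]
  rw [← Finset.mul_prod_erase Finset.univ (fun j => ν j (s j)) (Finset.mem_univ i)]
  congr 1
  rw [← Finset.prod_erase Finset.univ
    (f := fun j => ν j (if j = i then Set.univ else s j)) (a := i) (by simp)]
  refine Finset.prod_congr rfl fun j hj => ?_
  simp [Finset.ne_of_mem_erase hj]


/-- Integrate out the variables outside `u`. -/
noncomputable def hsE (u : Finset (Fin d)) (w : (∀ i, Q i) → ℝ) (x : ∀ i, Q i) : ℝ :=
  ∫ y, w (hsMerge u x y) ∂(Measure.pi ν)

lemma hsE_measurable {w : (∀ i, Q i) → ℝ} (hw : Measurable w) (u : Finset (Fin d)) :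
    Measurable (hsE ν u w) := by
  have h : StronglyMeasurable fun p : (∀ i, Q i) × (∀ i, Q i) => w (hsMerge u p.1 p.2) :=
    (hw.comp (hsMerge_measurable u)).stronglyMeasurable
  exact h.integral_prod_right'.measurable

lemma hsE_congr {w : (∀ i, Q i) → ℝ} (u : Finset (Fin d)) {x y : ∀ i, Q i}
    (h : ∀ i ∈ u, x i = y i) : hsE ν u w x = hsE ν u w y := by
  unfold hsE
  congr 1
  funext y'
  congr 1
  funext i
  unfold hsMerge
  by_cases hi : i ∈ u <;> simp [hi, h i]

lemma hsE_of_depends {w : (∀ i, Q i) → ℝ} {v u : Finset (Fin d)}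
    (hdep : ∀ x y : ∀ i, Q i, (∀ i ∈ v, x i = y i) → w x = w y) (hvu : v ⊆ u)
    (x : ∀ i, Q i) : hsE ν u w x = w x := by
  unfold hsE
  have h : ∀ y, w (hsMerge u x y) = w x := fun y =>
    hdep _ _ fun i hi => by simp [hsMerge, hvu hi]
  simp only [h, integral_const, measure_univ, ENNReal.toReal_one, probReal_univ, one_smul]

lemma hsE_univ (w : (∀ i, Q i) → ℝ) (x : ∀ i, Q i) : hsE ν Finset.univ w x = w x := by
  unfold hsE
  have h : ∀ y, hsMerge Finset.univ x y = x := fun y => by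
    funext i; simp [hsMerge]
  simp only [h, integral_const, measure_univ, ENNReal.toReal_one, probReal_univ, one_smul]

lemma hs_comp_integrable {w : (∀ i, Q i) → ℝ} (hw : Integrable w (Measure.pi ν))
    (u : Finset (Fin d)) :
    Integrable (fun p : (∀ i, Q i) × (∀ i, Q i) => w (hsMerge u p.1 p.2))
      ((Measure.pi ν).prod (Measure.pi ν)) :=
  ((hsMerge_measurePreserving ν u).integrable_comp hw.aestronglyMeasurable).2 hw

lemma hs_section_integrable {w : (∀ i, Q i) → ℝ} (hw : Integrable w (Measure.pi ν))
    (u : Finset (Fin d)) :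
    ∀ᵐ x ∂(Measure.pi ν), Integrable (fun y => w (hsMerge u x y)) (Measure.pi ν) :=
  (hs_comp_integrable ν hw u).prod_right_ae

lemma hsE_memℒp {w : (∀ i, Q i) → ℝ} (hw : Measurable w)
    (hw2 : MemLp w 2 (Measure.pi ν)) (u : Finset (Fin d)) :
    MemLp (hsE ν u w) 2 (Measure.pi ν) := by
  set μ := Measure.pi ν with hμ
  have hmeas := hsE_measurable ν hw u
  have hsq : Integrable (fun p : (∀ i, Q i) × (∀ i, Q i) => w (hsMerge u p.1 p.2) ^ 2)
      (μ.prod μ) := by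
    have h1 : Integrable (fun x => w x ^ 2) μ := hw2.integrable_sq
    exact ((hsMerge_measurePreserving ν u).integrable_comp h1.aestronglyMeasurable).2 h1
  have hI : Integrable (fun x => ∫ y, w (hsMerge u x y) ^ 2 ∂μ) μ := hsq.integral_prod_left
  rw [memLp_two_iff_integrable_sq hmeas.aestronglyMeasurable]
  refine Integrable.mono' hI ((hmeas.pow_const 2).aestronglyMeasurable) ?_
  filter_upwards [hs_section_integrable ν (hw2.integrable one_le_two) u, hsq.prod_right_ae]
    with x h1 h2
  have hsecm : Measurable fun y => w (hsMerge u x y) :=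
    hw.comp ((hsMerge_measurable u).comp (measurable_prodMk_left (x := x)))
  have hmem : MemLp (fun y => w (hsMerge u x y)) 2 μ :=
    (memLp_two_iff_integrable_sq hsecm.aestronglyMeasurable).2 h2
  have hvar := ProbabilityTheory.variance_nonneg (fun y => w (hsMerge u x y)) μ
  rw [ProbabilityTheory.variance_eq_sub hmem] at hvar
  have hb : (∫ y, w (hsMerge u x y) ∂μ) ^ 2 ≤ ∫ y, w (hsMerge u x y) ^ 2 ∂μ := by
    have : (∫ y, ((fun y => w (hsMerge u x y)) ^ 2) y ∂μ) = ∫ y, w (hsMerge u x y) ^ 2 ∂μ := by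
      simp [Pi.pow_apply]
    linarith [hvar, this]
  calc ‖hsE ν u w x ^ 2‖ = (hsE ν u w x) ^ 2 := by
        rw [Real.norm_eq_abs, abs_of_nonneg (sq_nonneg _)]
    _ ≤ _ := hb


lemma hsMerge_update (v : Finset (Fin d)) (i : Fin d) (hi : i ∈ v) (x y : ∀ j, Q j) (t : Q i) :
    hsMerge v (Function.update x i t) y = hsMerge (v.erase i) x (Function.update y i t) := by
  funext j
  rcases eq_or_ne j i with rfl | hj
  · simp [hsMerge, hi]
  · by_cases hjv : j ∈ v <;>
      simp [hsMerge, hjv, hj, Function.update_of_ne hj, Finset.mem_erase]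

lemma hsE_update_of_not_mem {w : (∀ i, Q i) → ℝ} (v : Finset (Fin d)) {i : Fin d}
    (hi : i ∉ v) (x : ∀ j, Q j) (t : Q i) :
    hsE ν v w (Function.update x i t) = hsE ν v w x :=
  hsE_congr ν v fun j hj => Function.update_of_ne (fun h : j = i => hi (h ▸ hj)) t x

lemma hs_update_integral {w : (∀ i, Q i) → ℝ} (v : Finset (Fin d)) {i : Fin d} (hi : i ∈ v)
    {x : ∀ j, Q j}
    (hG : Integrable (fun y => w (hsMerge (v.erase i) x y)) (Measure.pi ν)) :
    Integrable (fun t => hsE ν v w (Function.update x i t)) (ν i) ∧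
      ∫ t, hsE ν v w (Function.update x i t) ∂(ν i) = hsE ν (v.erase i) w x := by
  set μ := Measure.pi ν with hμ
  set G : (∀ j, Q j) → ℝ := fun y => w (hsMerge (v.erase i) x y) with hGdef
  have hF : Integrable (fun p : Q i × (∀ j, Q j) => G (Function.update p.2 i p.1))
      ((ν i).prod μ) :=
    ((hsUpdate_measurePreserving ν i).integrable_comp hG.aestronglyMeasurable).2 hG
  have heq : ∀ t, hsE ν v w (Function.update x i t) = ∫ y, G (Function.update y i t) ∂μ := by
    intro t
    unfold hsE
    congr 1
    funext y
    rw [hsMerge_update v i hi]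
  have hmapint : ∫ p : Q i × (∀ j, Q j), G (Function.update p.2 i p.1) ∂((ν i).prod μ)
      = ∫ y, G y ∂μ := by
    have hmap := integral_map (f := G)
      (hsUpdate_measurePreserving ν i).measurable.aemeasurable
      (by rw [(hsUpdate_measurePreserving ν i).map_eq]; exact hG.aestronglyMeasurable)
    rw [(hsUpdate_measurePreserving ν i).map_eq] at hmap
    exact hmap.symm
  constructor
  · rw [show (fun t => hsE ν v w (Function.update x i t))
        = fun t => ∫ y, G (Function.update y i t) ∂μ from funext heq]
    exact hF.integral_prod_left
  · calc ∫ t, hsE ν v w (Function.update x i t) ∂(ν i)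
        = ∫ t, ∫ y, G (Function.update y i t) ∂μ ∂(ν i) := by simp_rw [heq]
      _ = ∫ p : Q i × (∀ j, Q j), G (Function.update p.2 i p.1) ∂((ν i).prod μ) :=
        integral_integral hF
      _ = ∫ y, G y ∂μ := hmapint
      _ = hsE ν (v.erase i) w x := rfl

lemma hs_mobius (g : Finset (Fin d) → ℝ) :
    ∑ u : Finset (Fin d), ∑ v ∈ u.powerset, (-1 : ℝ) ^ (u \ v).card * g v
      = g Finset.univ := by
  have h1 : ∀ u : Finset (Fin d), (∑ v ∈ u.powerset, (-1:ℝ)^(u \ v).card * g v)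
      = ∑ v : Finset (Fin d), if v ∈ u.powerset then (-1:ℝ)^(u \ v).card * g v else 0 := by
    intro u
    rw [Finset.sum_ite_mem, Finset.univ_inter]
  simp_rw [h1, Finset.mem_powerset]
  rw [Finset.sum_comm]
  have h2 : ∀ v : Finset (Fin d),
      (∑ u : Finset (Fin d), if v ⊆ u then (-1:ℝ)^(u \ v).card * g v else 0)
      = (if v = Finset.univ then (1:ℝ) else 0) * g v := by
    intro v
    have hfac : ∀ u : Finset (Fin d), (if v ⊆ u then (-1:ℝ)^(u \ v).card * g v else 0)
        = (if v ⊆ u then (-1:ℝ)^(u \ v).card else 0) * g v := by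
      intro u; split <;> ring
    simp_rw [hfac, ← Finset.sum_mul]
    congr 1
    rw [← Finset.sum_filter]
    have hbij : ∑ u ∈ Finset.univ.filter (fun u => v ⊆ u), (-1:ℝ)^(u \ v).card
        = ∑ w ∈ vᶜ.powerset, (-1:ℝ)^w.card := by
      refine Finset.sum_nbij' (fun u => u \ v) (fun w => v ∪ w) ?_ ?_ ?_ ?_ ?_
      · intro u hu
        rw [Finset.mem_powerset]
        intro a ha
        exact Finset.mem_compl.2 (Finset.mem_sdiff.1 ha).2
      · intro w hw
        simp only [Finset.mem_filter, Finset.mem_univ, true_and]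
        exact Finset.subset_union_left
      · intro u hu
        simp only [Finset.mem_filter, Finset.mem_univ, true_and] at hu
        exact Finset.union_sdiff_of_subset hu
      · intro w hw
        rw [Finset.mem_powerset] at hw
        show (v ∪ w) \ v = w
        rw [Finset.union_sdiff_left, Finset.sdiff_eq_self_iff_disjoint.2]
        refine Finset.disjoint_left.2 ?_
        intro a hav ha
        exact Finset.mem_compl.1 (hw hav) ha
      · intro u hu; rfl
    rw [hbij]
    have h3 : (∑ w ∈ vᶜ.powerset, (-1:ℝ)^w.card)
        = ((∑ w ∈ vᶜ.powerset, (-1:ℤ)^w.card : ℤ) : ℝ) := by push_cast; rfl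
    rw [h3, Finset.sum_powerset_neg_one_pow_card]
    by_cases hv : v = Finset.univ
    · simp [hv]
    · rw [if_neg hv, if_neg (fun h => hv (Finset.compl_eq_empty_iff v |>.1 h))]
      simp
  simp_rw [h2, ite_mul, one_mul, zero_mul]
  simp


lemma hsMerge_update_right (u : Finset (Fin d)) {i : Fin d} (hi : i ∉ u) (x y : ∀ j, Q j)
    (t : Q i) :
    hsMerge u x (Function.update y i t) = Function.update (hsMerge u x y) i t := by
  funext j
  rcases eq_or_ne j i with rfl | hj
  · simp [hsMerge, hi]
  · by_cases hju : j ∈ u <;> simp [hsMerge, hju, Function.update_of_ne hj]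

/-- The Hoeffding--Sobol summands. -/
noncomputable def hsF (z : (∀ i, Q i) → ℝ) (u : Finset (Fin d)) (x : ∀ i, Q i) : ℝ :=
  ∑ v ∈ u.powerset, (-1 : ℝ) ^ (u \ v).card * hsE ν v z x

lemma hsF_measurable {z : (∀ i, Q i) → ℝ} (hz : Measurable z) (u : Finset (Fin d)) :
    Measurable (hsF ν z u) :=
  Finset.measurable_sum u.powerset fun v _ => (hsE_measurable ν hz v).const_mul _

lemma hsF_memℒp {z : (∀ i, Q i) → ℝ} (hz : Measurable z) (hz2 : MemLp z 2 (Measure.pi ν))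
    (u : Finset (Fin d)) : MemLp (hsF ν z u) 2 (Measure.pi ν) :=
  memLp_finset_sum u.powerset fun v _ => (hsE_memℒp ν hz hz2 v).const_mul _

lemma hsF_depends (z : (∀ i, Q i) → ℝ) (u : Finset (Fin d)) (x y : ∀ i, Q i)
    (h : ∀ i ∈ u, x i = y i) : hsF ν z u x = hsF ν z u y := by
  unfold hsF
  refine Finset.sum_congr rfl fun v hv => ?_
  rw [Finset.mem_powerset] at hv
  rw [hsE_congr ν v fun i hi => h i (hv hi)]

lemma hsF_sum (z : (∀ i, Q i) → ℝ) (x : ∀ i, Q i) :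
    ∑ u : Finset (Fin d), hsF ν z u x = z x := by
  unfold hsF
  exact (hs_mobius (fun v => hsE ν v z x)).trans (hsE_univ ν z x)

lemma hsF_zero_mean {z : (∀ i, Q i) → ℝ} (hz : Measurable z)
    (hz1 : Integrable z (Measure.pi ν)) (u : Finset (Fin d)) {i : Fin d} (hi : i ∈ u) :
    ∀ᵐ x ∂(Measure.pi ν), ∫ t, hsF ν z u (Function.update x i t) ∂(ν i) = 0 := by
  set μ := Measure.pi ν with hμ
  have hae : ∀ᵐ x ∂μ, ∀ w : Finset (Fin d), Integrable (fun y => z (hsMerge w x y)) μ :=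
    ae_all_iff.2 fun w => hs_section_integrable ν hz1 w
  filter_upwards [hae] with x hx
  obtain ⟨s, hs, rfl⟩ : ∃ s, i ∉ s ∧ u = insert i s :=
    ⟨u.erase i, Finset.notMem_erase _ _, (Finset.insert_erase hi).symm⟩
  have hint : ∀ v ∈ (insert i s).powerset,
      Integrable (fun t => (-1:ℝ) ^ ((insert i s) \ v).card
        * hsE ν v z (Function.update x i t)) (ν i) := by
    intro v _
    apply Integrable.const_mul
    by_cases hiv : i ∈ v
    · exact (hs_update_integral ν v hiv (hx (v.erase i))).1
    · simp_rw [hsE_update_of_not_mem ν v hiv x]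
      exact integrable_const _
  unfold hsF
  rw [integral_finset_sum _ hint]
  have hval : ∀ v ∈ (insert i s).powerset,
      (∫ t, (-1:ℝ) ^ ((insert i s) \ v).card * hsE ν v z (Function.update x i t) ∂(ν i))
      = (-1:ℝ) ^ ((insert i s) \ v).card
          * (if i ∈ v then hsE ν (v.erase i) z x else hsE ν v z x) := by
    intro v _
    rw [integral_const_mul]
    congr 1
    by_cases hiv : i ∈ v
    · rw [if_pos hiv]
      exact (hs_update_integral ν v hiv (hx (v.erase i))).2
    · rw [if_neg hiv]
      simp_rw [hsE_update_of_not_mem ν v hiv x]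
      simp [integral_const]
  rw [Finset.sum_congr rfl hval, Finset.sum_powerset_insert hs, ← Finset.sum_add_distrib]
  apply Finset.sum_eq_zero
  intro t ht
  rw [Finset.mem_powerset] at ht
  have hit : i ∉ t := fun h => hs (ht h)
  have h1 : i ∈ insert i s \ t := Finset.mem_sdiff.2 ⟨Finset.mem_insert_self i s, hit⟩
  have hpos : 0 < ((insert i s) \ t).card := Finset.card_pos.2 ⟨i, h1⟩
  have hcard : ((insert i s) \ t).card = ((insert i s) \ insert i t).card + 1 := by
    rw [Finset.sdiff_insert, Finset.card_erase_of_mem h1]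
    omega
  rw [if_neg hit, if_pos (Finset.mem_insert_self i t), Finset.erase_insert hit, hcard,
    pow_succ]
  ring

lemma hs_vanish (h : (∀ i, Q i) → ℝ) (hm : Measurable h) (hint : Integrable h (Measure.pi ν))
    {u : Finset (Fin d)} {i : Fin d} (hiu : i ∉ u)
    (hzero : ∀ᵐ w ∂(Measure.pi ν), ∫ t, h (Function.update w i t) ∂(ν i) = 0) :
    ∀ᵐ x ∂(Measure.pi ν), ∫ y, h (hsMerge u x y) ∂(Measure.pi ν) = 0 := by
  have μdef : True := trivial
  have hzero' : (fun w => ∫ t, h (Function.update w i t) ∂(ν i)) =ᵐ[Measure.pi ν] (fun _ => 0) :=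
    hzero.mono fun w hw => hw
  have htrans : ∀ᵐ p : (∀ j, Q j) × (∀ j, Q j) ∂((Measure.pi ν).prod (Measure.pi ν)),
      ∫ t, h (Function.update (hsMerge u p.1 p.2) i t) ∂(ν i) = 0 := by
    have := Measure.QuasiMeasurePreserving.ae_eq_comp
      (hsMerge_measurePreserving ν u).quasiMeasurePreserving hzero'
    exact this.mono fun p hp => hp
  have hsec := hs_section_integrable ν hint u
  filter_upwards [Measure.ae_ae_of_ae_prod htrans, hsec] with x hx1 hx2
  set G : (∀ j, Q j) → ℝ := fun y => h (hsMerge u x y) with hGdef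
  have hF : Integrable (fun p : Q i × (∀ j, Q j) => G (Function.update p.2 i p.1))
      ((ν i).prod (Measure.pi ν)) :=
    ((hsUpdate_measurePreserving ν i).integrable_comp hx2.aestronglyMeasurable).2 hx2
  have e1 : ∫ y, G y ∂(Measure.pi ν)
      = ∫ p : Q i × (∀ j, Q j), G (Function.update p.2 i p.1) ∂((ν i).prod (Measure.pi ν)) := by
    have hmap := integral_map (f := G)
      (hsUpdate_measurePreserving ν i).measurable.aemeasurable
      (by rw [(hsUpdate_measurePreserving ν i).map_eq]; exact hx2.aestronglyMeasurable)
    rw [(hsUpdate_measurePreserving ν i).map_eq] at hmap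
    linarith [hmap]
  have e2 : (∫ p : Q i × (∀ j, Q j), G (Function.update p.2 i p.1) ∂((ν i).prod (Measure.pi ν)))
      = ∫ y, ∫ t, G (Function.update y i t) ∂(ν i) ∂(Measure.pi ν) :=
    (integral_integral (f := fun t y => G (Function.update y i t)) hF).symm.trans
      (integral_integral_swap (f := fun t y => G (Function.update y i t)) hF)
  have e3 : (∫ y, ∫ t, G (Function.update y i t) ∂(ν i) ∂(Measure.pi ν)) = 0 := by
    have hae0 : (fun y => ∫ t, G (Function.update y i t) ∂(ν i)) =ᵐ[Measure.pi ν] (fun _ => 0) := by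
      refine hx1.mono fun y hy => ?_
      have : ∀ t, G (Function.update y i t) = h (Function.update (hsMerge u x y) i t) := by
        intro t
        rw [hGdef]
        simp only []
        rw [hsMerge_update_right u hiu x y t]
      simp_rw [this]
      exact hy
    rw [integral_congr_ae hae0, integral_zero]
  exact e1.trans (e2.trans e3)


lemma hs_partial_sum (h : Finset (Fin d) → (∀ i, Q i) → ℝ)
    (hm : ∀ v, Measurable (h v)) (hint : ∀ v, Integrable (h v) (Measure.pi ν))
    (hdep : ∀ v, ∀ x y : ∀ i, Q i, (∀ i ∈ v, x i = y i) → h v x = h v y)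
    (hsum : ∀ᵐ x ∂(Measure.pi ν), ∑ v : Finset (Fin d), h v x = 0)
    (hzero : ∀ v, v ≠ ∅ → ∀ i ∈ v,
      ∀ᵐ x ∂(Measure.pi ν), ∫ t, h v (Function.update x i t) ∂(ν i) = 0)
    (u : Finset (Fin d)) :
    ∀ᵐ x ∂(Measure.pi ν), ∑ v ∈ u.powerset, h v x = 0 := by
  have hvan : ∀ᵐ x ∂(Measure.pi ν), ∀ v : Finset (Fin d), ¬ v ⊆ u →
      ∫ y, h v (hsMerge u x y) ∂(Measure.pi ν) = 0 := by
    rw [ae_all_iff]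
    intro v
    by_cases hvu : v ⊆ u
    · exact ae_of_all _ fun x hc => absurd hvu hc
    · obtain ⟨i, hiv, hiu⟩ := Finset.not_subset.1 hvu
      have hvne : v ≠ ∅ := Finset.ne_empty_of_mem hiv
      exact (hs_vanish ν (h v) (hm v) (hint v) hiu (hzero v hvne i hiv)).mono
        fun x hx _ => hx
  have hsec : ∀ᵐ x ∂(Measure.pi ν), ∀ v : Finset (Fin d),
      Integrable (fun y => h v (hsMerge u x y)) (Measure.pi ν) :=
    ae_all_iff.2 fun v => hs_section_integrable ν (hint v) u
  have hsum' : (fun x => ∑ v : Finset (Fin d), h v x) =ᵐ[Measure.pi ν] (fun _ => 0) :=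
    hsum.mono fun x hx => hx
  have htrans : ∀ᵐ x ∂(Measure.pi ν), ∀ᵐ y ∂(Measure.pi ν),
      ∑ v : Finset (Fin d), h v (hsMerge u x y) = 0 := by
    have hcomp := Measure.QuasiMeasurePreserving.ae_eq_comp
      (hsMerge_measurePreserving ν u).quasiMeasurePreserving hsum'
    have hprod : ∀ᵐ p : ((∀ i, Q i) × (∀ i, Q i))
        ∂((Measure.pi ν).prod (Measure.pi ν)),
        ∑ v : Finset (Fin d), h v (hsMerge u p.1 p.2) = 0 := hcomp.mono fun p hp => hp
    exact Measure.ae_ae_of_ae_prod hprod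
  filter_upwards [hvan, hsec, htrans] with x hx1 hx2 hx3
  have e1 : ∫ y, (∑ v : Finset (Fin d), h v (hsMerge u x y)) ∂(Measure.pi ν) = 0 := by
    rw [integral_congr_ae (hx3.mono fun y hy => hy)]
    exact integral_zero _ _
  rw [integral_finset_sum _ (fun v _ => hx2 v)] at e1
  have e2 : ∀ v : Finset (Fin d), (∫ y, h v (hsMerge u x y) ∂(Measure.pi ν))
      = if v ⊆ u then h v x else 0 := by
    intro v
    by_cases hvu : v ⊆ u
    · rw [if_pos hvu]
      have hc : ∀ y, h v (hsMerge u x y) = h v x := fun y =>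
        hdep v _ _ fun i hi => by simp [hsMerge, hvu hi]
      simp only [hc, integral_const, measure_univ, ENNReal.toReal_one, probReal_univ, one_smul]
    · rw [if_neg hvu]
      exact hx1 v hvu
  rw [Finset.sum_congr rfl (fun v _ => e2 v)] at e1
  simp_rw [← Finset.mem_powerset] at e1
  rw [Finset.sum_ite_mem, Finset.univ_inter] at e1
  exact e1

lemma hs_unique (h : Finset (Fin d) → (∀ i, Q i) → ℝ)
    (hm : ∀ v, Measurable (h v)) (hint : ∀ v, Integrable (h v) (Measure.pi ν))
    (hdep : ∀ v, ∀ x y : ∀ i, Q i, (∀ i ∈ v, x i = y i) → h v x = h v y)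
    (hsum : ∀ᵐ x ∂(Measure.pi ν), ∑ v : Finset (Fin d), h v x = 0)
    (hzero : ∀ v, v ≠ ∅ → ∀ i ∈ v,
      ∀ᵐ x ∂(Measure.pi ν), ∫ t, h v (Function.update x i t) ∂(ν i) = 0) :
    ∀ u, ∀ᵐ x ∂(Measure.pi ν), h u x = 0 := by
  have hall : ∀ᵐ x ∂(Measure.pi ν), ∀ u : Finset (Fin d),
      ∑ v ∈ u.powerset, h v x = 0 :=
    ae_all_iff.2 fun u => hs_partial_sum ν h hm hint hdep hsum hzero u
  have key : ∀ᵐ x ∂(Measure.pi ν), ∀ u : Finset (Fin d), h u x = 0 := by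
    filter_upwards [hall] with x hx
    intro u
    induction u using Finset.strongInduction with
    | _ u ih =>
      have h0 := hx u
      rw [← Finset.add_sum_erase _ _ (Finset.mem_powerset_self u)] at h0
      have hz : ∀ v ∈ u.powerset.erase u, h v x = 0 := by
        intro v hv
        have hne := Finset.ne_of_mem_erase hv
        have hsub := Finset.mem_powerset.1 (Finset.mem_of_mem_erase hv)
        exact ih v (lt_of_le_of_ne hsub hne)
      rw [Finset.sum_eq_zero hz] at h0
      linarith
  intro u
  exact key.mono fun x hx => hx u

end HoeffdingAux

/-- `IsHoeffdingDecomposition ν z f` says that the family `f u`, indexed by subsets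
`u ⊆ {1,…,d}`, is an ANOVA (Hoeffding–Sobol) decomposition of `z` with respect to the
product probability measure `μ = ⨂ᵢ ν i`: each summand `f u` is square-integrable,
depends only on the variables indexed by `u`, the summands add up to `z` a.e., and
every nonconstant summand integrates to zero in each of its own variables. -/
def IsHoeffdingDecomposition {d : ℕ} {Q : Fin d → Type*} [∀ i, MeasurableSpace (Q i)]
    (ν : ∀ i, Measure (Q i)) (z : (∀ i, Q i) → ℝ)
    (f : Finset (Fin d) → (∀ i, Q i) → ℝ) : Prop :=
  (∀ u, Measurable (f u)) ∧
  (∀ u, MemLp (f u) 2 (Measure.pi ν)) ∧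
  (∀ u, ∀ x y : ∀ i, Q i, (∀ i ∈ u, x i = y i) → f u x = f u y) ∧
  (∀ᵐ x ∂(Measure.pi ν), z x = ∑ u : Finset (Fin d), f u x) ∧
  (∀ u, u ≠ ∅ → ∀ i ∈ u,
    ∀ᵐ x ∂(Measure.pi ν), ∫ t, f u (Function.update x i t) ∂(ν i) = 0)

/-- Hoeffding–Sobol decomposition: every `z ∈ L²(μ)` for a product probability measure
`μ = μ₁ ⊗ ⋯ ⊗ μ_d` admits a decomposition `z = ∑_{u ⊆ {1,…,d}} z_u(x^u)` into summands
depending only on the variables in `u` and with zero mean in each of their own variables,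
and such a decomposition is unique up to a.e. equality of each summand. -/
theorem hoeffding_sobol_decomposition {d : ℕ} {Q : Fin d → Type*}
    [∀ i, MeasurableSpace (Q i)]
    (ν : ∀ i, Measure (Q i)) [∀ i, IsProbabilityMeasure (ν i)]
    (z : (∀ i, Q i) → ℝ) (hz : Measurable z) (hz2 : MemLp z 2 (Measure.pi ν)) :
    (∃ f, IsHoeffdingDecomposition ν z f) ∧
    (∀ f g, IsHoeffdingDecomposition ν z f → IsHoeffdingDecomposition ν z g →
      ∀ u, f u =ᵐ[Measure.pi ν] g u) := by
  constructor
  · refine ⟨hsF ν z, hsF_measurable ν hz, hsF_memℒp ν hz hz2, hsF_depends ν z,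
      ae_of_all _ fun x => (hsF_sum ν z x).symm, ?_⟩
    intro u _ i hi
    exact hsF_zero_mean ν hz (hz2.integrable one_le_two) u hi
  · rintro f g ⟨hfm, hf2, hfdep, hfsum, hfzero⟩ ⟨hgm, hg2, hgdep, hgsum, hgzero⟩
    set h : Finset (Fin d) → (∀ i, Q i) → ℝ := fun u x => f u x - g u x with hh
    have hm : ∀ v, Measurable (h v) := fun v => (hfm v).sub (hgm v)
    have hint : ∀ v, Integrable (h v) (Measure.pi ν) := fun v =>
      ((hf2 v).integrable one_le_two).sub ((hg2 v).integrable one_le_two)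
    have hdep : ∀ v, ∀ x y : ∀ i, Q i, (∀ i ∈ v, x i = y i) → h v x = h v y := by
      intro v x y hxy
      simp only [hh]
      rw [hfdep v x y hxy, hgdep v x y hxy]
    have hsum : ∀ᵐ x ∂(Measure.pi ν), ∑ v : Finset (Fin d), h v x = 0 := by
      filter_upwards [hfsum, hgsum] with x h1 h2
      simp only [hh, Finset.sum_sub_distrib, ← h1, ← h2, sub_self]
    have hzero : ∀ v, v ≠ ∅ → ∀ i ∈ v, ∀ᵐ x ∂(Measure.pi ν),
        ∫ t, h v (Function.update x i t) ∂(ν i) = 0 := by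
      intro v hv i hi
      have hfsec : ∀ᵐ x ∂(Measure.pi ν),
          Integrable (fun t => f v (Function.update x i t)) (ν i) := by
        have hfi := (hf2 v).integrable one_le_two
        have hF : Integrable (fun p : Q i × (∀ j, Q j) => f v (Function.update p.2 i p.1))
            ((ν i).prod (Measure.pi ν)) :=
          ((hsUpdate_measurePreserving ν i).integrable_comp hfi.aestronglyMeasurable).2 hfi
        exact hF.prod_left_ae
      have hgsec : ∀ᵐ x ∂(Measure.pi ν),
          Integrable (fun t => g v (Function.update x i t)) (ν i) := by
        have hgi := (hg2 v).integrable one_le_two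
        have hG : Integrable (fun p : Q i × (∀ j, Q j) => g v (Function.update p.2 i p.1))
            ((ν i).prod (Measure.pi ν)) :=
          ((hsUpdate_measurePreserving ν i).integrable_comp hgi.aestronglyMeasurable).2 hgi
        exact hG.prod_left_ae
      filter_upwards [hfzero v hv i hi, hgzero v hv i hi, hfsec, hgsec] with x h1 h2 h3 h4
      simp only [hh]
      rw [integral_sub h3 h4, h1, h2, sub_zero]
    intro u
    have hu := hs_unique ν h hm hint hdep hsum hzero u
    filter_upwards [hu] with x hx
    simpa [hh, sub_eq_zero] using hx
end

section
/- In the two-level recursive co-kriging model Z₂(x) = ρ₁ Z₁*(x) + δ₂(x) with Z₁* ⊥ δ₂, where Z₁* has mean μ₁(x) and covariance k₁(x,x̃), δ₂ has mean μ_δ(x) and covariance k_δ(x,x̃), and ρ₁ is a random scalar independent of (Z₁*, δ₂) with E[ρ₁] = ρ̂₁ and E[ρ₁²] = ρ̂₁², then Z₂ has mean ρ̂₁ μ₁(x) + μ_δ(x) and covariance Cov(Z₂(x), Z₂(x̃)) = ρ̂₁² k₁(x,x̃) + k_δ(x,x̃) + Var(ρ₁) μ₁(x)μ₁(x̃). 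-/
open MeasureTheory ProbabilityTheory

/-- In the two-level recursive co-kriging model `Z₂(x) = ρ₁ Z₁*(x) + δ₂(x)` with
`Z₁* ⊥ δ₂` and `ρ₁` a random scalar independent of `(Z₁*, δ₂)`, with `E[ρ₁] = ρ̂₁` and
`E[ρ₁²] = ρ̂₁²`, the process `Z₂` has mean `ρ̂₁ μ₁(x) + μ_δ(x)` and covariance
`Cov(Z₂(x),Z₂(x̃)) = ρ̂₁² k₁(x,x̃) + k_δ(x,x̃) + Var(ρ₁) μ₁(x)μ₁(x̃)`. -/
theorem cokriging_two_level_mean_cov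
    {𝒳 Ω : Type*} [MeasurableSpace Ω] (P : Measure Ω) [IsProbabilityMeasure P]
    (Z1 δ : 𝒳 → Ω → ℝ) (ρ : Ω → ℝ)
    (μ1 μδ : 𝒳 → ℝ) (k1 kδ : 𝒳 → 𝒳 → ℝ) (ρhat ρ2hat : ℝ)
    (hZ1meas : ∀ x, Measurable (Z1 x)) (hδmeas : ∀ x, Measurable (δ x))
    (hρmeas : Measurable ρ)
    -- second-order structure of `Z₁*` and `δ₂`
    (hZ1mean : ∀ x, ∫ ω, Z1 x ω ∂P = μ1 x)
    (hZ1int : ∀ x y, Integrable (fun ω => Z1 x ω * Z1 y ω) P)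
    (hZ1cov : ∀ x y, ∫ ω, Z1 x ω * Z1 y ω ∂P - μ1 x * μ1 y = k1 x y)
    (hδmean : ∀ x, ∫ ω, δ x ω ∂P = μδ x)
    (hδint : ∀ x y, Integrable (fun ω => δ x ω * δ y ω) P)
    (hδcov : ∀ x y, ∫ ω, δ x ω * δ y ω ∂P - μδ x * μδ y = kδ x y)
    -- moments of the adjustment coefficient
    (hρint : Integrable ρ P) (hρ2int : Integrable (fun ω => ρ ω ^ 2) P)
    (hρmean : ∫ ω, ρ ω ∂P = ρhat) (hρ2 : ∫ ω, ρ ω ^ 2 ∂P = ρ2hat)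
    -- independence: `ρ₁ ⊥ (Z₁*, δ₂)` and `Z₁* ⊥ δ₂`
    (hindepρ : ∀ x y, IndepFun ρ (fun ω => (Z1 x ω, Z1 y ω, δ x ω, δ y ω)) P)
    (hindep : ∀ x y, IndepFun (fun ω => (Z1 x ω, Z1 y ω)) (fun ω => (δ x ω, δ y ω)) P)
    -- the process `Z₂ = ρ₁ Z₁* + δ₂`
    (Z2 : 𝒳 → Ω → ℝ) (hZ2 : ∀ x ω, Z2 x ω = ρ ω * Z1 x ω + δ x ω) :
    (∀ x, ∫ ω, Z2 x ω ∂P = ρhat * μ1 x + μδ x) ∧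
    (∀ x xt, ∫ ω, Z2 x ω * Z2 xt ω ∂P - (∫ ω, Z2 x ω ∂P) * (∫ ω, Z2 xt ω ∂P)
      = ρ2hat * k1 x xt + kδ x xt + (ρ2hat - ρhat ^ 2) * (μ1 x * μ1 xt)) := by
  -- L¹ integrability of the processes from their second moments
  have hZ1L1 : ∀ x, Integrable (Z1 x) P := fun x =>
    ((memLp_two_iff_integrable_sq (hZ1meas x).aestronglyMeasurable).2
      (by simpa [sq] using hZ1int x x)).integrable (by norm_num)
  have hδL1 : ∀ x, Integrable (δ x) P := fun x =>
    ((memLp_two_iff_integrable_sq (hδmeas x).aestronglyMeasurable).2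
      (by simpa [sq] using hδint x x)).integrable (by norm_num)
  -- derived independences
  have hρZ1 : ∀ x, IndepFun ρ (Z1 x) P := fun x =>
    (hindepρ x x).comp measurable_id measurable_fst
  have hρ2ZZ : ∀ x y, IndepFun (fun ω => ρ ω ^ 2) (fun ω => Z1 x ω * Z1 y ω) P := fun x y =>
    (hindepρ x y).comp (measurable_id.pow_const 2) (measurable_fst.mul measurable_snd.fst)
  have hρZδ : ∀ x y, IndepFun ρ (fun ω => Z1 x ω * δ y ω) P := fun x y =>
    (hindepρ x y).comp measurable_id (measurable_fst.mul measurable_snd.snd.snd)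
  have hρZδ' : ∀ x y, IndepFun ρ (fun ω => Z1 y ω * δ x ω) P := fun x y =>
    (hindepρ x y).comp measurable_id (measurable_snd.fst.mul measurable_snd.snd.fst)
  have hZδ : ∀ x y, IndepFun (Z1 x) (δ y) P := fun x y =>
    (hindep x y).comp measurable_fst measurable_snd
  -- integrability and mean of mixed products
  have hZδint : ∀ x y, Integrable (fun ω => Z1 x ω * δ y ω) P := fun x y =>
    (hZδ x y).integrable_mul (hZ1L1 x) (hδL1 y)
  have hZδmean : ∀ x y, ∫ ω, Z1 x ω * δ y ω ∂P = μ1 x * μδ y := fun x y => by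
    have h : ∫ ω, Z1 x ω * δ y ω ∂P = (∫ ω, Z1 x ω ∂P) * ∫ ω, δ y ω ∂P :=
      (hZδ x y).integral_mul_eq_mul_integral (hZ1L1 x).aestronglyMeasurable (hδL1 y).aestronglyMeasurable
    rw [h, hZ1mean, hδmean]
  have hρZint : ∀ x, Integrable (fun ω => ρ ω * Z1 x ω) P := fun x =>
    (hρZ1 x).integrable_mul hρint (hZ1L1 x)
  have hρZmean : ∀ x, ∫ ω, ρ ω * Z1 x ω ∂P = ρhat * μ1 x := fun x => by
    have h : ∫ ω, ρ ω * Z1 x ω ∂P = (∫ ω, ρ ω ∂P) * ∫ ω, Z1 x ω ∂P :=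
      (hρZ1 x).integral_mul_eq_mul_integral hρint.aestronglyMeasurable (hZ1L1 x).aestronglyMeasurable
    rw [h, hρmean, hZ1mean]
  -- mean of Z₂
  have hmean : ∀ x, ∫ ω, Z2 x ω ∂P = ρhat * μ1 x + μδ x := by
    intro x
    have h0 : (fun ω => Z2 x ω) = fun ω => ρ ω * Z1 x ω + δ x ω := funext fun ω => hZ2 x ω
    have h1 : ∫ ω, (ρ ω * Z1 x ω + δ x ω) ∂P
        = (∫ ω, ρ ω * Z1 x ω ∂P) + ∫ ω, δ x ω ∂P := integral_add (hρZint x) (hδL1 x)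
    rw [h0, h1, hρZmean, hδmean]
  refine ⟨hmean, fun x xt => ?_⟩
  -- the four pieces of the second moment
  have i1 : Integrable (fun ω => ρ ω ^ 2 * (Z1 x ω * Z1 xt ω)) P :=
    (hρ2ZZ x xt).integrable_mul hρ2int (hZ1int x xt)
  have i2 : Integrable (fun ω => ρ ω * (Z1 x ω * δ xt ω)) P :=
    (hρZδ x xt).integrable_mul hρint (hZδint x xt)
  have i3 : Integrable (fun ω => ρ ω * (Z1 xt ω * δ x ω)) P :=
    (hρZδ' x xt).integrable_mul hρint (hZδint xt x)
  have e1 : ∫ ω, ρ ω ^ 2 * (Z1 x ω * Z1 xt ω) ∂P = ρ2hat * (k1 x xt + μ1 x * μ1 xt) := by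
    have h : ∫ ω, ρ ω ^ 2 * (Z1 x ω * Z1 xt ω) ∂P
        = (∫ ω, ρ ω ^ 2 ∂P) * ∫ ω, Z1 x ω * Z1 xt ω ∂P :=
      (hρ2ZZ x xt).integral_mul_eq_mul_integral hρ2int.aestronglyMeasurable (hZ1int x xt).aestronglyMeasurable
    have hI : ∫ ω, Z1 x ω * Z1 xt ω ∂P = k1 x xt + μ1 x * μ1 xt := by
      linarith [hZ1cov x xt]
    rw [h, hρ2, hI]
  have e2 : ∫ ω, ρ ω * (Z1 x ω * δ xt ω) ∂P = ρhat * (μ1 x * μδ xt) := by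
    have h : ∫ ω, ρ ω * (Z1 x ω * δ xt ω) ∂P
        = (∫ ω, ρ ω ∂P) * ∫ ω, Z1 x ω * δ xt ω ∂P :=
      (hρZδ x xt).integral_mul_eq_mul_integral hρint.aestronglyMeasurable (hZδint x xt).aestronglyMeasurable
    rw [h, hρmean, hZδmean]
  have e3 : ∫ ω, ρ ω * (Z1 xt ω * δ x ω) ∂P = ρhat * (μ1 xt * μδ x) := by
    have h : ∫ ω, ρ ω * (Z1 xt ω * δ x ω) ∂P
        = (∫ ω, ρ ω ∂P) * ∫ ω, Z1 xt ω * δ x ω ∂P :=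
      (hρZδ' x xt).integral_mul_eq_mul_integral hρint.aestronglyMeasurable (hZδint xt x).aestronglyMeasurable
    rw [h, hρmean, hZδmean]
  have e4 : ∫ ω, δ x ω * δ xt ω ∂P = kδ x xt + μδ x * μδ xt := by
    linarith [hδcov x xt]
  have hexp : (fun ω => Z2 x ω * Z2 xt ω)
      = fun ω => ρ ω ^ 2 * (Z1 x ω * Z1 xt ω) + ρ ω * (Z1 x ω * δ xt ω)
        + ρ ω * (Z1 xt ω * δ x ω) + δ x ω * δ xt ω := by
    funext ω; rw [hZ2, hZ2]; ring
  have a3 : ∫ ω, (ρ ω ^ 2 * (Z1 x ω * Z1 xt ω) + ρ ω * (Z1 x ω * δ xt ω)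
        + ρ ω * (Z1 xt ω * δ x ω) + δ x ω * δ xt ω) ∂P
      = (∫ ω, (ρ ω ^ 2 * (Z1 x ω * Z1 xt ω) + ρ ω * (Z1 x ω * δ xt ω)
        + ρ ω * (Z1 xt ω * δ x ω)) ∂P) + ∫ ω, δ x ω * δ xt ω ∂P :=
    integral_add ((i1.add i2).add i3) (hδint x xt)
  have a2 : ∫ ω, (ρ ω ^ 2 * (Z1 x ω * Z1 xt ω) + ρ ω * (Z1 x ω * δ xt ω)
        + ρ ω * (Z1 xt ω * δ x ω)) ∂P
      = (∫ ω, (ρ ω ^ 2 * (Z1 x ω * Z1 xt ω) + ρ ω * (Z1 x ω * δ xt ω)) ∂P)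
        + ∫ ω, ρ ω * (Z1 xt ω * δ x ω) ∂P := integral_add (i1.add i2) i3
  have a1 : ∫ ω, (ρ ω ^ 2 * (Z1 x ω * Z1 xt ω) + ρ ω * (Z1 x ω * δ xt ω)) ∂P
      = (∫ ω, ρ ω ^ 2 * (Z1 x ω * Z1 xt ω) ∂P) + ∫ ω, ρ ω * (Z1 x ω * δ xt ω) ∂P :=
    integral_add i1 i2
  have hsecond : ∫ ω, Z2 x ω * Z2 xt ω ∂P
      = ρ2hat * (k1 x xt + μ1 x * μ1 xt) + ρhat * (μ1 x * μδ xt)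
        + ρhat * (μ1 xt * μδ x) + (kδ x xt + μδ x * μδ xt) := by
    rw [hexp, a3, a2, a1, e1, e2, e3, e4]
  rw [hsecond, hmean x, hmean xt]; ring
end
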